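/- Let N ≥ 2, α ∈ (0,1), and let k ∈ ℕ^{N-1} with k ≠ 0. Define e_k : ℝ^{N-1} → ℝ by e_k(s) = ∏_{i=1}^{N-1} cos(k_i s_i). Then the function t ↦ (1 − e_k(t))/|t|^{N+α} is Lebesgue integrable on ℝ^{N-1}, and for every s ∈ ℝ^{N-1} the principal value lim_{ε→0⁺} ∫_{{t : |t| ≥ ε}} (e_k(s) − e_k(s−t))/|t|^{N+α} dt exists and equals e_k(s) · ∫_{ℝ^{N-1}} (1 − e_k(t))/|t|^{N+α} dt. -/

import Mathlib

open MeasureTheory Real Filter Topology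

noncomputable section

abbrev ES (m : ℕ) : Type := EuclideanSpace ℝ (Fin (m + 1))

/-- `e_k(s) = ∏ᵢ cos(kᵢ sᵢ)`. -/
def ek {m : ℕ} (k : Fin (m + 1) → ℕ) (s : ES m) : ℝ :=
  ∏ i, Real.cos ((k i : ℝ) * s i)

lemma ek_continuous {m : ℕ} (k : Fin (m + 1) → ℕ) : Continuous (ek (m := m) k) := by
  unfold ek
  exact continuous_finset_prod _ fun i _ =>
    Real.continuous_cos.comp (continuous_const.mul (PiLp.continuous_apply (p := 2) (β := fun _ => ℝ) i))

lemma abs_ek_le_one {m : ℕ} (k : Fin (m + 1) → ℕ) (s : ES m) : |ek k s| ≤ 1 := by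
  unfold ek
  rw [Finset.abs_prod]
  exact Finset.prod_le_one (fun i _ => abs_nonneg _) (fun i _ => Real.abs_cos_le_one _)

lemma one_sub_cos_le_half_sq (x : ℝ) : 1 - Real.cos x ≤ x ^ 2 / 2 := by
  have h1 : |Real.sin (x / 2)| ≤ |x / 2| := Real.abs_sin_le_abs
  have h2 : Real.sin (x / 2) ^ 2 ≤ (x / 2) ^ 2 := by
    rw [← sq_abs, ← sq_abs (x / 2)]
    exact pow_le_pow_left₀ (abs_nonneg _) h1 2
  have h3 : Real.cos x = Real.cos (x / 2) ^ 2 - Real.sin (x / 2) ^ 2 := by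
    have := Real.cos_two_mul' (x / 2)
    rw [show 2 * (x / 2) = x by ring] at this
    exact this
  have h4 := Real.sin_sq_add_cos_sq (x / 2)
  nlinarith

lemma one_sub_prod_le {ι : Type*} [DecidableEq ι] (s : Finset ι) (f : ι → ℝ) (h : ∀ i, |f i| ≤ 1) :
    1 - ∏ i ∈ s, f i ≤ ∑ i ∈ s, (1 - f i) := by
  induction s using Finset.induction_on with
  | empty => simp
  | @insert a s' hnotmem ih =>
    rw [Finset.prod_insert hnotmem, Finset.sum_insert hnotmem]
    have hP : |∏ i ∈ s', f i| ≤ 1 := by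
      rw [Finset.abs_prod]
      exact Finset.prod_le_one (fun i _ => abs_nonneg _) (fun i _ => h i)
    have h1 := abs_le.mp (h a)
    have h2 := abs_le.mp hP
    nlinarith [mul_le_mul_of_nonneg_right h1.2 (by linarith : (0:ℝ) ≤ 1 - ∏ i ∈ s', f i)]

lemma coord_sq_le {m : ℕ} (t : ES m) (i : Fin (m + 1)) : t i ^ 2 ≤ ‖t‖ ^ 2 := by
  rw [EuclideanSpace.norm_eq, Real.sq_sqrt (by positivity)]
  calc t i ^ 2 = ‖t i‖ ^ 2 := by rw [Real.norm_eq_abs, sq_abs]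
  _ ≤ ∑ j, ‖t j‖ ^ 2 := Finset.single_le_sum (f := fun j => ‖t j‖ ^ 2)
      (fun j _ => by positivity) (Finset.mem_univ i)

lemma one_sub_ek_le {m : ℕ} (k : Fin (m + 1) → ℕ) (t : ES m) :
    1 - ek k t ≤ ((∑ i, ((k i : ℝ)) ^ 2) / 2) * ‖t‖ ^ 2 := by
  calc 1 - ek k t ≤ ∑ i, (1 - Real.cos ((k i : ℝ) * t i)) :=
        one_sub_prod_le _ _ (fun i => Real.abs_cos_le_one _)
  _ ≤ ∑ i, ((k i : ℝ) * t i) ^ 2 / 2 :=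
        Finset.sum_le_sum fun i _ => one_sub_cos_le_half_sq _
  _ ≤ ∑ i, ((k i : ℝ)) ^ 2 * ‖t‖ ^ 2 / 2 := by
        refine Finset.sum_le_sum fun i _ => ?_
        rw [mul_pow]
        have := coord_sq_le t i
        have hk2 : (0:ℝ) ≤ ((k i : ℝ)) ^ 2 := by positivity
        nlinarith
  _ = ((∑ i, ((k i : ℝ)) ^ 2) / 2) * ‖t‖ ^ 2 := by
        rw [Finset.sum_div, Finset.sum_mul]
        congr 1; ext i; ring

lemma integrableOn_inv_rpow_ball (m : ℕ) {q : ℝ} (hq0 : 0 < q) (hq : q < (m + 1 : ℝ)) :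
    IntegrableOn (fun t : ES m => (‖t‖ ^ q)⁻¹) (Metric.ball 0 1) volume := by
  have hdrank : Module.finrank ℝ (ES m) = m + 1 := finrank_euclideanSpace_fin
  set d : ℕ := m + 1 with hd
  set c : ℝ := (volume (Metric.ball (0 : ES m) 1)).toReal with hc
  have hc0 : 0 ≤ c := ENNReal.toReal_nonneg
  set r : ℕ → ℝ := fun n => (2 : ℝ)⁻¹ ^ n with hr
  have hrpos : ∀ n, 0 < r n := fun n => by positivity
  have hr1 : ∀ n, r n ≤ 1 := fun n => pow_le_one₀ (by norm_num) (by norm_num)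
  set f : ES m → ℝ := fun t => (‖t‖ ^ q)⁻¹ with hf
  have hfmeas : Measurable f :=
    ((continuous_norm.rpow_const fun x => Or.inr hq0.le).measurable).inv
  have hfnonneg : ∀ t, 0 ≤ f t := fun t => by positivity
  set s : ℕ → Set (ES m) := fun n => Metric.ball 0 (r n) \ Metric.ball 0 (r (n + 1)) with hs
  have hsm : ∀ n, MeasurableSet (s n) := fun n => measurableSet_ball.diff measurableSet_ball
  have hμs : ∀ n, volume (s n) < ⊤ := fun n =>
    lt_of_le_of_lt (measure_mono Set.diff_subset) measure_ball_lt_top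
  set a : ℝ := (2 : ℝ) ^ q with ha
  have ha1 : 1 < a := Real.one_lt_rpow_iff_of_pos (by norm_num) |>.mpr (by norm_num [hq0])
  have ha0 : 0 < a := by linarith
  -- bound on each shell
  have hbd : ∀ n, ∀ t ∈ s n, f t ≤ a ^ (n + 1) := by
    intro n t ht
    have h1 : r (n + 1) ≤ ‖t‖ := by
      have := ht.2
      rw [Metric.mem_ball, dist_zero_right, not_lt] at this
      exact this
    have h2 : r (n + 1) ^ q ≤ ‖t‖ ^ q :=
      Real.rpow_le_rpow (le_of_lt (hrpos _)) h1 hq0.le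
    have h3 : f t ≤ (r (n + 1) ^ q)⁻¹ := by
      apply inv_anti₀ (Real.rpow_pos_of_pos (hrpos _) q) h2
    refine h3.trans (le_of_eq ?_)
    show (((2:ℝ)⁻¹ ^ (n + 1)) ^ q)⁻¹ = a ^ (n + 1)
    rw [inv_pow, Real.inv_rpow (by positivity), inv_inv, ← Real.rpow_natCast (2:ℝ) (n+1),
      ← Real.rpow_mul (by norm_num : (0:ℝ) ≤ 2), mul_comm,
      Real.rpow_mul (by norm_num : (0:ℝ) ≤ 2), Real.rpow_natCast]
  -- integrable on each shell
  have hi : ∀ n, IntegrableOn f (s n) volume := fun n =>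
    Measure.integrableOn_of_bounded (hμs n).ne hfmeas.aestronglyMeasurable
      (M := a ^ (n + 1)) ((ae_restrict_iff' (hsm n)).mpr (Eventually.of_forall fun t ht => by
        rw [Real.norm_eq_abs, abs_of_nonneg (hfnonneg t)]; exact hbd n t ht))
  -- summability
  have hμball : ∀ n, (volume (Metric.ball (0 : ES m) (r n))).toReal = r n ^ d * c := by
    intro n
    rw [Measure.addHaar_ball _ _ (hrpos n).le, hdrank, ENNReal.toReal_mul,
      ENNReal.toReal_ofReal (by positivity)]
  have hsum : Summable fun n : ℕ => ∫ t in s n, ‖f t‖ := by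
    have hle : ∀ n : ℕ, ∫ t in s n, ‖f t‖ ≤ (a * c) * (a * (2⁻¹ : ℝ) ^ d) ^ n := by
      intro n
      have h1 : ‖∫ t in s n, ‖f t‖‖ ≤ a ^ (n + 1) * (volume (s n)).toReal :=
        norm_setIntegral_le_of_norm_le_const (hμs n)
          (fun t ht => by rw [norm_norm, Real.norm_eq_abs, abs_of_nonneg (hfnonneg t)]
                          exact hbd n t ht)
      have h2 : (volume (s n)).toReal ≤ r n ^ d * c := by
        rw [← hμball n]
        exact ENNReal.toReal_mono measure_ball_lt_top.ne (measure_mono Set.diff_subset)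
      calc ∫ t in s n, ‖f t‖ ≤ ‖∫ t in s n, ‖f t‖‖ := le_abs_self _
        _ ≤ a ^ (n + 1) * (volume (s n)).toReal := h1
        _ ≤ a ^ (n + 1) * (r n ^ d * c) := by
            exact mul_le_mul_of_nonneg_left h2 (by positivity)
        _ = (a * c) * (a * (2⁻¹ : ℝ) ^ d) ^ n := by
            simp only [hr]
            rw [mul_pow, ← pow_mul, ← pow_mul, pow_succ, Nat.mul_comm d n]
            ring
    have hρ : a * (2⁻¹ : ℝ) ^ d < 1 := by
      have h2d : ((2 : ℝ)⁻¹) ^ d = ((2 : ℝ) ^ (d : ℝ))⁻¹ := by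
        rw [inv_pow, Real.rpow_natCast]
      rw [h2d, ha, ← Real.rpow_neg (by norm_num : (0:ℝ) ≤ 2),
        ← Real.rpow_add (by norm_num : (0:ℝ) < 2)]
      refine Real.rpow_lt_one_of_one_lt_of_neg (by norm_num) ?_
      rw [hd]; push_cast; linarith
    have hρ0 : 0 ≤ a * (2⁻¹ : ℝ) ^ d := by positivity
    exact Summable.of_nonneg_of_le
      (fun n => setIntegral_nonneg (hsm n) fun t _ => norm_nonneg _)
      hle ((summable_geometric_of_lt_one hρ0 hρ).mul_left _)
  have hunion : IntegrableOn f (⋃ n, s n) volume :=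
    integrableOn_iUnion_of_summable_integral_norm hi hsum
  have hzero : IntegrableOn f ({0} : Set (ES m)) volume := by
    unfold IntegrableOn
    rw [show volume.restrict ({0} : Set (ES m)) = (volume ({0} : Set (ES m))) • Measure.dirac 0 from
      Measure.restrict_singleton _ _]
    rw [measure_singleton, zero_smul]
    exact integrable_zero_measure
  refine (hunion.union hzero).mono_set ?_
  intro t ht
  rw [Metric.mem_ball, dist_zero_right] at ht
  by_cases h0 : t = 0
  · exact Set.mem_union_right _ (by simp [h0])
  · left
    have hnt : 0 < ‖t‖ := norm_pos_iff.mpr h0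
    have hex : ∃ j, r (j + 1) ≤ ‖t‖ := by
      obtain ⟨n, hn⟩ := exists_pow_lt_of_lt_one hnt (by norm_num : (2⁻¹ : ℝ) < 1)
      have h' : r (n + 1) ≤ (2⁻¹ : ℝ) ^ n :=
        pow_le_pow_of_le_one (by norm_num) (by norm_num) (Nat.le_succ n)
      exact ⟨n, le_trans h' (le_of_lt hn)⟩
    set j := Nat.find hex with hj
    have hj1 : r (j + 1) ≤ ‖t‖ := Nat.find_spec hex
    have hj2 : ‖t‖ < r j := by
      rcases Nat.eq_zero_or_pos j with h | h
      · rw [h]; simpa [hr] using ht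
      · have := Nat.find_min hex (m := j - 1) (by omega)
        rw [not_le] at this
        have : ‖t‖ < r (j - 1 + 1) := this
        rwa [Nat.sub_add_cancel h] at this
    exact Set.mem_iUnion.mpr ⟨j, ⟨by rwa [Metric.mem_ball, dist_zero_right],
      by rw [Metric.mem_ball, dist_zero_right]; exact not_lt.mpr hj1⟩⟩

lemma integrableOn_div_rpow_compl {m : ℕ} {p : ℝ} (hp : (m + 1 : ℝ) < p) {ε : ℝ} (hε : 0 < ε)
    {φ : ES m → ℝ} (hφ : Continuous φ) {M : ℝ} (hM : ∀ t, |φ t| ≤ M) :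
    IntegrableOn (fun t : ES m => φ t / ‖t‖ ^ p) {t : ES m | ε ≤ ‖t‖} volume := by
  have hp0 : 0 < p := lt_of_le_of_lt (by positivity) hp
  have hM0 : 0 ≤ M := le_trans (abs_nonneg _) (hM 0)
  have hZ : 0 < (1 + ε⁻¹) ^ p := Real.rpow_pos_of_pos (by positivity) p
  have hint : Integrable (fun t : ES m => (M * (1 + ε⁻¹) ^ p) * (1 + ‖t‖) ^ (-p)) volume := by
    refine Integrable.const_mul ?_ _
    exact integrable_one_add_norm (by rw [finrank_euclideanSpace_fin]; push_cast; exact hp)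
  have hmeasset : MeasurableSet {t : ES m | ε ≤ ‖t‖} :=
    (isClosed_le continuous_const continuous_norm).measurableSet
  refine Integrable.mono' hint.integrableOn ?_ ?_
  · exact (hφ.measurable.div
      ((continuous_norm.rpow_const fun x => Or.inr hp0.le).measurable)).aestronglyMeasurable
  · rw [ae_restrict_iff' hmeasset]
    refine Eventually.of_forall fun t ht => ?_
    have htn : 0 < ‖t‖ := lt_of_lt_of_le hε ht
    have hX : 0 < ‖t‖ ^ p := Real.rpow_pos_of_pos htn p
    have hY : 0 < (1 + ‖t‖) ^ p := Real.rpow_pos_of_pos (by positivity) p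
    have hkey : 1 + ‖t‖ ≤ (1 + ε⁻¹) * ‖t‖ := by
      have : 1 ≤ ε⁻¹ * ‖t‖ := by
        rw [← inv_mul_cancel₀ (ne_of_gt hε)]
        exact mul_le_mul_of_nonneg_left ht (by positivity)
      nlinarith
    have h1 : (1 + ‖t‖) ^ p ≤ (1 + ε⁻¹) ^ p * ‖t‖ ^ p := by
      rw [← Real.mul_rpow (by positivity) (norm_nonneg _)]
      exact Real.rpow_le_rpow (by positivity) hkey hp0.le
    rw [Real.rpow_neg (by positivity)]
    rw [norm_div, Real.norm_eq_abs, Real.norm_eq_abs (‖t‖ ^ p), abs_of_pos hX]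
    calc |φ t| / ‖t‖ ^ p ≤ M / ‖t‖ ^ p := by gcongr; exact hM t
      _ ≤ M * (1 + ε⁻¹) ^ p * ((1 + ‖t‖) ^ p)⁻¹ := by
          rw [div_le_iff₀ hX]
          have h2 : M * ((1 + ‖t‖) ^ p) ≤ M * ((1 + ε⁻¹) ^ p * ‖t‖ ^ p) :=
            mul_le_mul_of_nonneg_left h1 hM0
          have h3 := mul_le_mul_of_nonneg_right h2 (inv_nonneg.mpr hY.le)
          calc M = M * ((1 + ‖t‖) ^ p) * ((1 + ‖t‖) ^ p)⁻¹ := by field_simp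
            _ ≤ M * ((1 + ε⁻¹) ^ p * ‖t‖ ^ p) * ((1 + ‖t‖) ^ p)⁻¹ := h3
            _ = M * (1 + ε⁻¹) ^ p * ((1 + ‖t‖) ^ p)⁻¹ * ‖t‖ ^ p := by ring

lemma abs_one_sub_ek_le_two {m : ℕ} (k : Fin (m + 1) → ℕ) (t : ES m) : |1 - ek k t| ≤ 2 := by
  have h := abs_le.mp (abs_ek_le_one k t)
  exact abs_le.mpr ⟨by linarith, by linarith⟩

lemma ek_zero {m : ℕ} (k : Fin (m + 1) → ℕ) : ek k (0 : ES m) = 1 := by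
  unfold ek
  have : ∀ i : Fin (m + 1), (0 : ES m) i = 0 := fun i => rfl
  simp [this]

lemma one_sub_ek_nonneg {m : ℕ} (k : Fin (m + 1) → ℕ) (t : ES m) : 0 ≤ 1 - ek k t := by
  have h := abs_le.mp (abs_ek_le_one k t)
  linarith

lemma main_integrable {m : ℕ} (k : Fin (m + 1) → ℕ) {α : ℝ} (hα : α ∈ Set.Ioo (0:ℝ) 1) :
    Integrable (fun t : ES m => (1 - ek k t) / ‖t‖ ^ ((m : ℝ) + 2 + α)) volume := by
  obtain ⟨hα0, hα1⟩ := hα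
  set p : ℝ := (m : ℝ) + 2 + α with hp
  set q : ℝ := (m : ℝ) + α with hq
  have hq0 : 0 < q := by positivity
  have hqd : q < (m + 1 : ℝ) := by rw [hq]; linarith
  have hpd : (m + 1 : ℝ) < p := by rw [hp]; linarith
  set C : ℝ := (∑ i, ((k i : ℝ)) ^ 2) / 2 with hC
  have hC0 : 0 ≤ C := by positivity
  have hcompl : IntegrableOn (fun t : ES m => (1 - ek k t) / ‖t‖ ^ p) {t : ES m | 1 ≤ ‖t‖}
      volume :=
    integrableOn_div_rpow_compl hpd one_pos (continuous_const.sub (ek_continuous k))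
      (abs_one_sub_ek_le_two k)
  have hball : IntegrableOn (fun t : ES m => (1 - ek k t) / ‖t‖ ^ p) (Metric.ball 0 1)
      volume := by
    have hint := (integrableOn_inv_rpow_ball m hq0 hqd).const_mul C
    refine Integrable.mono' hint ?_ ?_
    · exact ((continuous_const.sub (ek_continuous k)).measurable.div
        ((continuous_norm.rpow_const fun x => Or.inr (by positivity : (0:ℝ) ≤ p)).measurable)
        ).aestronglyMeasurable
    · refine Eventually.of_forall fun t => ?_
      have hnum : 0 ≤ 1 - ek k t := one_sub_ek_nonneg k t
      have hden : (0:ℝ) ≤ ‖t‖ ^ p := Real.rpow_nonneg (norm_nonneg _) p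
      rw [Real.norm_eq_abs, abs_of_nonneg (div_nonneg hnum hden)]
      by_cases h0 : t = 0
      · subst h0
        rw [ek_zero, norm_zero, Real.zero_rpow (by positivity : p ≠ 0)]
        simp [Real.zero_rpow (ne_of_gt hq0)]
      · have htn : 0 < ‖t‖ := norm_pos_iff.mpr h0
        have h1 : (1 - ek k t) / ‖t‖ ^ p ≤ (C * ‖t‖ ^ 2) / ‖t‖ ^ p := by
          gcongr
          exact one_sub_ek_le k t
        refine h1.trans (le_of_eq ?_)
        rw [mul_div_assoc]
        congr 1
        rw [show ((‖t‖:ℝ) ^ (2:ℕ)) = ‖t‖ ^ ((2:ℝ)) by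
              rw [← Real.rpow_natCast ‖t‖ 2]; norm_num,
          ← Real.rpow_sub htn, ← Real.rpow_neg (norm_nonneg _)]
        congr 1
        rw [hp, hq]; ring
  rw [← integrableOn_univ]
  have huniv : (Set.univ : Set (ES m)) = Metric.ball 0 1 ∪ {t : ES m | 1 ≤ ‖t‖} := by
    ext t
    simp only [Set.mem_univ, Set.mem_union, Metric.mem_ball, dist_zero_right, Set.mem_setOf_eq,
      true_iff]
    exact lt_or_ge ‖t‖ 1
  rw [huniv]
  exact hball.union hcompl

lemma key_identity {m : ℕ} (k : Fin (m + 1) → ℕ) {p : ℝ} (hp : (m + 1 : ℝ) < p) {ε : ℝ}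
    (hε : 0 < ε) (s : ES m) :
    ∫ t in {t : ES m | ε ≤ ‖t‖}, ek k (s - t) / ‖t‖ ^ p =
      ∫ t in {t : ES m | ε ≤ ‖t‖}, (ek k s * ek k t) / ‖t‖ ^ p := by
  set A : Set (ES m) := {t : ES m | ε ≤ ‖t‖} with hA
  set F : (Fin (m + 1) → Bool) → (ES m ≃ₗᵢ[ℝ] ES m) := fun σ =>
    LinearIsometryEquiv.piLpCongrRight 2
      (fun i => if σ i then LinearIsometryEquiv.neg ℝ else LinearIsometryEquiv.refl ℝ ℝ) with hF
  have hFapply : ∀ σ (t : ES m) (i : Fin (m + 1)),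
      F σ t i = if σ i then -(t i) else t i := by
    intro σ t i
    simp only [hF, LinearIsometryEquiv.piLpCongrRight_apply, PiLp.toLp_apply]
    by_cases h : σ i <;> simp [h]
  have hFnorm : ∀ σ (t : ES m), ‖F σ t‖ = ‖t‖ := fun σ t => (F σ).norm_map t
  have hFpre : ∀ σ, (F σ) ⁻¹' A = A := by
    intro σ; ext t
    simp only [Set.mem_preimage, hA, Set.mem_setOf_eq, hFnorm]
  have hchg : ∀ σ, ∫ t in A, ek k (s - F σ t) / ‖t‖ ^ p = ∫ t in A, ek k (s - t) / ‖t‖ ^ p := by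
    intro σ
    have h1 := ((F σ).measurePreserving).setIntegral_preimage_emb
      ((F σ).toHomeomorph.measurableEmbedding) (fun u : ES m => ek k (s - u) / ‖u‖ ^ p) A
    rw [hFpre σ] at h1
    rw [← h1]
    refine integral_congr_ae (Eventually.of_forall fun t => ?_)
    simp only [hFnorm]
  have Iσ : ∀ σ, IntegrableOn (fun t : ES m => ek k (s - F σ t) / ‖t‖ ^ p) A volume := by
    intro σ
    exact integrableOn_div_rpow_compl hp hε
      ((ek_continuous k).comp (continuous_const.sub (F σ).continuous))
      (M := 1) (fun t => abs_ek_le_one k _)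
  have hpt : ∀ t : ES m,
      ∑ σ : Fin (m + 1) → Bool, ek k (s - F σ t) = 2 ^ (m + 1) * (ek k s * ek k t) := by
    intro t
    have hcoord : ∀ σ, ek k (s - F σ t) =
        ∏ i, Real.cos ((k i : ℝ) * (s i - (if σ i then -(t i) else t i))) := by
      intro σ
      unfold ek
      refine Finset.prod_congr rfl fun i _ => ?_
      rw [show (s - F σ t) i = s i - F σ t i from rfl, hFapply]
    simp only [hcoord]
    rw [← Fintype.piFinset_univ, ← Finset.prod_univ_sum
      (t := fun _ : Fin (m + 1) => (Finset.univ : Finset Bool))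
      (f := fun i b => Real.cos ((k i : ℝ) * (s i - (if b then -(t i) else t i))))]
    have hterm : ∀ i : Fin (m + 1),
        (∑ b : Bool, Real.cos ((k i : ℝ) * (s i - (if b then -(t i) else t i)))) =
          2 * (Real.cos ((k i : ℝ) * s i) * Real.cos ((k i : ℝ) * t i)) := by
      intro i
      rw [Fintype.sum_bool]
      simp only [Bool.false_eq_true, if_true, if_false, sub_neg_eq_add]
      rw [mul_add, mul_sub, Real.cos_add, Real.cos_sub]
      ring
    rw [Finset.prod_congr rfl fun i _ => hterm i]
    rw [Finset.prod_mul_distrib, Finset.prod_mul_distrib, Finset.prod_const,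
      Finset.card_univ, Fintype.card_fin]
    unfold ek
    ring
  have hsum : ∑ σ : Fin (m + 1) → Bool, ∫ t in A, ek k (s - F σ t) / ‖t‖ ^ p =
      ∫ t in A, (∑ σ : Fin (m + 1) → Bool, ek k (s - F σ t)) / ‖t‖ ^ p := by
    rw [← integral_finset_sum _ (fun σ _ => Iσ σ)]
    refine integral_congr_ae (Eventually.of_forall fun t => ?_)
    simp [Finset.sum_div]
  have hcard : Fintype.card (Fin (m + 1) → Bool) = 2 ^ (m + 1) := by
    simp [Fintype.card_fun]
  have hmain : ((2 : ℝ) ^ (m + 1)) * ∫ t in A, ek k (s - t) / ‖t‖ ^ p =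
      ((2 : ℝ) ^ (m + 1)) * ∫ t in A, (ek k s * ek k t) / ‖t‖ ^ p := by
    calc ((2 : ℝ) ^ (m + 1)) * ∫ t in A, ek k (s - t) / ‖t‖ ^ p
        = ∑ σ : Fin (m + 1) → Bool, ∫ t in A, ek k (s - F σ t) / ‖t‖ ^ p := by
          rw [Finset.sum_congr rfl fun σ _ => hchg σ, Finset.sum_const, Finset.card_univ,
            hcard, nsmul_eq_mul]
          push_cast
          ring
      _ = ∫ t in A, (∑ σ : Fin (m + 1) → Bool, ek k (s - F σ t)) / ‖t‖ ^ p := hsum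
      _ = ∫ t in A, ((2 : ℝ) ^ (m + 1) * (ek k s * ek k t)) / ‖t‖ ^ p := by
          refine integral_congr_ae (Eventually.of_forall fun t => ?_)
          simp only [hpt]
      _ = ((2 : ℝ) ^ (m + 1)) * ∫ t in A, (ek k s * ek k t) / ‖t‖ ^ p := by
          simp_rw [mul_div_assoc]
          exact integral_const_mul _ _
  exact mul_left_cancel₀ (by positivity) hmain

/-- for `k ≠ 0`, the function `t ↦ (1 - e_k(t))/|t|^{N+α}` is integrable on
`ℝ^{N-1}`, and for every `s` the principal value
`lim_{ε→0⁺} ∫_{|t|≥ε} (e_k(s) - e_k(s-t))/|t|^{N+α} dt` exists and equals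
`e_k(s) ∫ (1 - e_k(t))/|t|^{N+α} dt`.  Here `N = m + 2 ≥ 2`. -/
theorem statement_3 (m : ℕ) (α : ℝ) (hα : α ∈ Set.Ioo (0 : ℝ) 1)
    (k : Fin (m + 1) → ℕ) (hk : k ≠ 0) :
    Integrable (fun t : ES m => (1 - ek k t) / ‖t‖ ^ ((m : ℝ) + 2 + α)) ∧
      ∀ s : ES m,
        Tendsto
          (fun ε : ℝ => ∫ t in {t : ES m | ε ≤ ‖t‖},
            (ek k s - ek k (s - t)) / ‖t‖ ^ ((m : ℝ) + 2 + α))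
          (𝓝[>] (0 : ℝ))
          (𝓝 (ek k s * ∫ t : ES m, (1 - ek k t) / ‖t‖ ^ ((m : ℝ) + 2 + α))) := by
  obtain ⟨hα0, hα1⟩ := hα
  have hf : Integrable (fun t : ES m => (1 - ek k t) / ‖t‖ ^ ((m : ℝ) + 2 + α)) volume :=
    main_integrable k ⟨hα0, hα1⟩
  set p : ℝ := (m : ℝ) + 2 + α with hpdef
  set f : ES m → ℝ := fun t => (1 - ek k t) / ‖t‖ ^ p with hfdef
  have hpd : (m + 1 : ℝ) < p := by rw [hpdef]; linarith
  refine ⟨hf, fun s => ?_⟩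
  -- eventual identity
  have hstep : ∀ ε : ℝ, 0 < ε →
      (∫ t in {t : ES m | ε ≤ ‖t‖}, (ek k s - ek k (s - t)) / ‖t‖ ^ p) =
        ek k s * ∫ t in {t : ES m | ε ≤ ‖t‖}, f t := by
    intro ε hε
    have hint1 : IntegrableOn (fun t : ES m => ek k s / ‖t‖ ^ p) {t : ES m | ε ≤ ‖t‖} volume :=
      integrableOn_div_rpow_compl hpd hε continuous_const (M := |ek k s|) (fun t => le_refl _)
    have hint2 : IntegrableOn (fun t : ES m => ek k (s - t) / ‖t‖ ^ p) {t : ES m | ε ≤ ‖t‖}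
        volume :=
      integrableOn_div_rpow_compl hpd hε
        ((ek_continuous k).comp (continuous_const.sub continuous_id)) (M := 1)
        (fun t => abs_ek_le_one k _)
    have hint3 : IntegrableOn (fun t : ES m => (ek k s * ek k t) / ‖t‖ ^ p) {t : ES m | ε ≤ ‖t‖}
        volume := by
      refine integrableOn_div_rpow_compl hpd hε (continuous_const.mul (ek_continuous k))
        (M := |ek k s|) (fun t => ?_)
      rw [abs_mul]
      calc |ek k s| * |ek k t| ≤ |ek k s| * 1 :=
            mul_le_mul_of_nonneg_left (abs_ek_le_one k t) (abs_nonneg _)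
        _ = |ek k s| := mul_one _
    calc (∫ t in {t : ES m | ε ≤ ‖t‖}, (ek k s - ek k (s - t)) / ‖t‖ ^ p)
        = ∫ t in {t : ES m | ε ≤ ‖t‖}, (ek k s / ‖t‖ ^ p - ek k (s - t) / ‖t‖ ^ p) := by
          refine integral_congr_ae (Eventually.of_forall fun t => ?_)
          simp only [sub_div]
      _ = (∫ t in {t : ES m | ε ≤ ‖t‖}, ek k s / ‖t‖ ^ p) -
          ∫ t in {t : ES m | ε ≤ ‖t‖}, ek k (s - t) / ‖t‖ ^ p := integral_sub hint1 hint2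
      _ = (∫ t in {t : ES m | ε ≤ ‖t‖}, ek k s / ‖t‖ ^ p) -
          ∫ t in {t : ES m | ε ≤ ‖t‖}, (ek k s * ek k t) / ‖t‖ ^ p := by
          rw [key_identity k hpd hε s]
      _ = ∫ t in {t : ES m | ε ≤ ‖t‖}, (ek k s / ‖t‖ ^ p - (ek k s * ek k t) / ‖t‖ ^ p) :=
          (integral_sub hint1 hint3).symm
      _ = ∫ t in {t : ES m | ε ≤ ‖t‖}, ek k s * f t := by
          refine integral_congr_ae (Eventually.of_forall fun t => ?_)
          simp only [hfdef]
          ring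
      _ = ek k s * ∫ t in {t : ES m | ε ≤ ‖t‖}, f t := integral_const_mul _ _
  -- set identities
  have hball_eq : ∀ ε : ℝ, {t : ES m | ε ≤ ‖t‖} = (Metric.ball (0 : ES m) ε)ᶜ := by
    intro ε; ext t
    simp [Metric.mem_ball, dist_zero_right, not_lt]
  have hsplit : ∀ ε : ℝ,
      (∫ t in {t : ES m | ε ≤ ‖t‖}, f t) = (∫ t, f t) - ∫ t in Metric.ball (0 : ES m) ε, f t := by
    intro ε
    rw [hball_eq ε]
    have h := integral_add_compl (measurableSet_ball (x := (0 : ES m)) (ε := ε)) hf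
    linarith
  -- measure of small balls tends to zero
  have hμ : Tendsto (fun ε : ℝ => volume (Metric.ball (0 : ES m) ε)) (𝓝[>] 0) (𝓝 0) := by
    have h2 : Tendsto (fun ε : ℝ => ε ^ (m + 1)) (𝓝[>] 0) (𝓝 0) :=
      ((continuous_pow (m + 1)).tendsto' 0 0 (by simp)).mono_left nhdsWithin_le_nhds
    have h3 : Tendsto (fun ε : ℝ => ENNReal.ofReal (ε ^ (m + 1))) (𝓝[>] 0) (𝓝 0) := by
      have := (ENNReal.continuous_ofReal.tendsto 0).comp h2
      simpa [Function.comp_def] using this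
    have h4 := ENNReal.Tendsto.mul_const h3
      (Or.inr (measure_ball_lt_top (μ := (volume : Measure (ES m))) (x := 0) (r := 1)).ne)
    rw [zero_mul] at h4
    refine Tendsto.congr' ?_ h4
    filter_upwards [self_mem_nhdsWithin] with ε (hε : ε ∈ Set.Ioi (0:ℝ))
    rw [Measure.addHaar_ball _ _ (le_of_lt hε), finrank_euclideanSpace_fin]
  have hIb : Tendsto (fun ε : ℝ => ∫ t in Metric.ball (0 : ES m) ε, f t) (𝓝[>] 0) (𝓝 0) :=
    hf.tendsto_setIntegral_nhds_zero hμ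
  have hIA : Tendsto (fun ε : ℝ => ∫ t in {t : ES m | ε ≤ ‖t‖}, f t) (𝓝[>] 0) (𝓝 (∫ t, f t)) := by
    have h5 : Tendsto (fun ε : ℝ => (∫ t, f t) - ∫ t in Metric.ball (0 : ES m) ε, f t)
        (𝓝[>] 0) (𝓝 ((∫ t, f t) - 0)) := tendsto_const_nhds.sub hIb
    rw [sub_zero] at h5
    exact h5.congr fun ε => (hsplit ε).symm
  have hfinal := hIA.const_mul (ek k s)
  refine Tendsto.congr' ?_ hfinal
  filter_upwards [self_mem_nhdsWithin] with ε (hε : ε ∈ Set.Ioi (0:ℝ))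
  exact (hstep ε hε).symm
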